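/- Let J be as given and let J' be the splitting of J at a vertex (μ, eν) ∈ J all of whose outgoing edges in the coding graph E_J are positive. Then edges of E_J between vertices different from (μ, eν) remain edges of E_{J'} with the same degree, and the new edges of E_{J'} are described as follows: (SE1) if E_J has an edge η from (μ, eν) to (δ, gγ) with μ ≠ δ, then there is exactly one f ∈ E^1 with s(f) = r(μ) such that E_{J'} has an edge η' from (μf, eνf) to (δ, gγ), and deg(η') = deg(η) − 1; (SE2) if E_J has an edge η from (μ, eν) to itself, then there is exactly one f ∈ E^1 with s(f) = r(μ) such that for every b ∈ E^1 with s(b) = r(μ) the graph E_{J'} has an edge η'_b from (μf, eνf) to (μb, eνb), and deg(η'_b) = deg(η); (SE3) if E_J has a non-negative edge η from (δ, gγ) to (μ, eν) with μ ≠ δ, then for every f ∈ E^1 with s(f) = r(μ) the graph E_{J'} has an edge η'_f from (δ, gγ) to (μf, eνf), and deg(η'_f) = deg(η) + 1; (SE4) if E_J has a negative edge η from (δ, gγ) to (μ, eν) with μ ≠ δ, then there is exactly one f ∈ E^1 with s(f) = r(μ) such that E_{J'} has an edge η' from (δ, gγ) to (μf, eνf), and deg(η') = deg(η) + 1. -/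

import Mathlib

/-- A finite directed multigraph. -/
structure FinGraph where
  V : Type
  E : Type
  fintV : Fintype V
  fintE : Fintype E
  src : E → V
  rng : E → V

variable {G : FinGraph}

/-- A finite path in the graph `G`: a source vertex together with a compatible
list of edges (a vertex is a path of length 0). -/
structure FPath (G : FinGraph) where
  source : G.V
  edges : List G.E
  head_src : ∀ e ∈ edges.head?, G.src e = source
  chain : edges.Chain' fun e f => G.rng e = G.src f

/-- The range (terminal vertex) of a finite path. -/
def FPath.range (p : FPath G) : G.V :=
  p.edges.getLast?.elim p.source G.rng

/-- The length-0 path at a vertex. -/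
def FPath.nil (G : FinGraph) (v : G.V) : FPath G :=
  ⟨v, [], by simp, List.isChain_nil⟩

/-- `p.Prefix q` : the path `p` is an initial segment of the path `q`. -/
def FPath.Prefix (p q : FPath G) : Prop :=
  p.source = q.source ∧ p.edges <+: q.edges

/-- The path obtained by removing the first edge (the tail `κ` of `ν = eκ`). -/
def FPath.tail (p : FPath G) : FPath G where
  source := p.edges.head?.elim p.source G.rng
  edges := p.edges.tail
  head_src := by
    cases hp : p.edges with
    | nil => simp
    | cons a l =>
      have h := p.chain
      rw [hp, List.Chain', List.isChain_cons] at h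
      intro e he
      simp only [hp, List.head?_cons, Option.elim, List.tail_cons] at he ⊢
      exact (h.1 e he).symm
  chain := p.chain.tail

/-- An infinite path in the graph `G`. -/
structure IPath (G : FinGraph) where
  edges : ℕ → G.E
  chain : ∀ i, G.rng (edges i) = G.src (edges (i + 1))

/-- The source vertex of an infinite path. -/
def IPath.source (p : IPath G) : G.V := G.src (p.edges 0)

/-- The cylinder set `Z(p)` of a finite path `p`: all infinite paths with prefix `p`. -/
def cylinder (p : FPath G) : Set (IPath G) :=
  {q | q.source = p.source ∧ ∀ i, (h : i < p.edges.length) → q.edges i = p.edges.get ⟨i, h⟩}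

/-- A finite collection `S` of finite paths is a partition of the path `ν`:
the cylinder sets are pairwise disjoint with union `Z(ν)`. -/
def IsPartitionOfPath (S : Set (FPath G)) (ν : FPath G) : Prop :=
  S.Finite ∧ (∀ p ∈ S, ∀ q ∈ S, p ≠ q → cylinder p ∩ cylinder q = ∅) ∧
    (⋃ p ∈ S, cylinder p) = cylinder ν

/-- A finite collection `S` of finite paths is a partition of the vertex `v`. -/
def IsPartitionOf (S : Set (FPath G)) (v : G.V) : Prop :=
  IsPartitionOfPath S (FPath.nil G v)

/-- Standing assumptions: no sinks, no sources, every cycle has an exit. -/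
structure Standing (G : FinGraph) : Prop where
  no_sinks : ∀ v : G.V, ∃ e, G.src e = v
  no_sources : ∀ v : G.V, ∃ e, G.rng e = v
  cycles_exit : ∀ p : FPath G, p.edges ≠ [] → p.range = p.source →
    ∃ e ∈ p.edges, ∃ f, f ≠ e ∧ G.src f = G.src e

/-- The combinatorial conditions making `u_J = Σ_{(μ,ν) ∈ J} S_μ S_ν^*` a unitary:
`J` is finite, `s(μ) = s(ν)`, `r(μ) = r(ν)`, `|ν| ≥ 1` for all `(μ,ν) ∈ J`, and both
families of cylinder sets are pairwise disjoint with union all of `E^∞`. -/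
structure IsUnitaryJ (G : FinGraph) (J : Set (FPath G × FPath G)) : Prop where
  finite : J.Finite
  src_eq : ∀ p ∈ J, (Prod.fst p).source = (Prod.snd p).source
  rng_eq : ∀ p ∈ J, FPath.range (Prod.fst p) = FPath.range (Prod.snd p)
  ne_nil : ∀ p ∈ J, (Prod.snd p).edges ≠ []
  disj₁ : ∀ p ∈ J, ∀ q ∈ J, p ≠ q → cylinder (Prod.fst p) ∩ cylinder (Prod.fst q) = ∅
  union₁ : (⋃ p ∈ J, cylinder (Prod.fst p)) = Set.univ
  disj₂ : ∀ p ∈ J, ∀ q ∈ J, p ≠ q → cylinder (Prod.snd p) ∩ cylinder (Prod.snd q) = ∅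
  union₂ : (⋃ p ∈ J, cylinder (Prod.snd p)) = Set.univ

/-- Adjacency in the coding graph `E_J`: there is an edge from `p = (μ₁, e₁ν₁)` to
`q = (μ₂, e₂ν₂)` iff the tail `ν₁` and `μ₂` are prefix-comparable
(the combinatorial content of `S_{ν₁}^* S_{μ₂} ≠ 0`). -/
def CGAdj (p q : FPath G × FPath G) : Prop :=
  FPath.Prefix p.2.tail q.1 ∨ FPath.Prefix q.1 p.2.tail

/-- The degree `|μ₂| − |ν₁|` of the coding-graph edge from `p` to `q`. -/
def cgDeg (p q : FPath G × FPath G) : ℤ :=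
  (q.1.edges.length : ℤ) - (p.2.tail.edges.length : ℤ)

/-- `IsAppend p q r` : the path `r` is the concatenation `p q`. -/
def IsAppend (p q r : FPath G) : Prop :=
  r.source = p.source ∧ q.source = p.range ∧ r.edges = p.edges ++ q.edges

/-- A finite path in the coding graph `E_J`, recorded by the (nonempty) list of
vertices of `J` it visits (a single vertex is a path of length 0). -/
structure CGPath (G : FinGraph) (J : Set (FPath G × FPath G)) where
  verts : List (FPath G × FPath G)
  ne : verts ≠ []
  mem : ∀ v ∈ verts, v ∈ J
  adj : verts.Chain' CGAdj

/-- The `E`-label of a path in the coding graph: the list of distinguished first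
edges `e` of the second coordinates of the vertices it visits. -/
def CGPath.elabel {J : Set (FPath G × FPath G)} (ω : CGPath G J) : List G.E :=
  ω.verts.filterMap fun v => v.2.edges.head?

/-- `IsLabelOf l γ` : `γ` is the `L_J`-label of the coding-graph path visiting the
vertices in the list `l` (all of whose edges are non-negative): the concatenation of
the `L_J`-labels of its edges, and the empty path at `r(μ)` for the length-0 path
at a vertex `(μ, eν)`. -/
inductive IsLabelOf : List (FPath G × FPath G) → FPath G → Prop
  | single (p : FPath G × FPath G) (γ : FPath G) :
      γ.edges = [] → γ.source = FPath.range p.1 → IsLabelOf [p] γ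
  | cons (p q : FPath G × FPath G) (rest : List (FPath G × FPath G)) (α γ δ : FPath G) :
      IsAppend p.2.tail α q.1 → IsLabelOf (q :: rest) γ → IsAppend α γ δ →
      IsLabelOf (p :: q :: rest) δ

/-- Every edge of the coding graph `E_J` is non-negative. -/
def AllEdgesNonneg (G : FinGraph) (J : Set (FPath G × FPath G)) : Prop :=
  ∀ p ∈ J, ∀ q ∈ J, CGAdj p q → 0 ≤ cgDeg p q

/-- The coding graph `E_J` contains a non-positive cycle. -/
def HasNonposCycle (G : FinGraph) (J : Set (FPath G × FPath G)) : Prop :=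
  ∃ ω : CGPath G J, 2 ≤ ω.verts.length ∧ ω.verts.getLast ω.ne = ω.verts.head ω.ne ∧
    ω.verts.Chain' fun p q => cgDeg p q ≤ 0

/-- All outgoing edges of the vertex `p` in the coding graph `E_J` are positive. -/
def AllOutPositive (G : FinGraph) (J : Set (FPath G × FPath G))
    (p : FPath G × FPath G) : Prop :=
  ∀ q ∈ J, CGAdj p q → 0 < cgDeg p q

/-- `IsSnoc p f q` : the path `q` is `p` extended by the single edge `f`. -/
def IsSnoc (p : FPath G) (f : G.E) (q : FPath G) : Prop :=
  q.source = p.source ∧ q.edges = p.edges ++ [f]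

/-- `IsSplitting G J p J'` : `J'` is the splitting of `J` at the vertex `p = (μ, eν)`,
i.e. `J' = (J ∖ {(μ,eν)}) ∪ {(μf, eνf) : f ∈ E¹, s(f) = r(μ)}`. -/
def IsSplitting (G : FinGraph) (J : Set (FPath G × FPath G)) (p : FPath G × FPath G)
    (J' : Set (FPath G × FPath G)) : Prop :=
  p ∈ J ∧ ∀ q, q ∈ J' ↔ (q ∈ J ∧ q ≠ p) ∨
    ∃ f, G.src f = FPath.range p.1 ∧ IsSnoc p.1 f q.1 ∧ IsSnoc p.2 f q.2

/-- The set of negative edges of the coding graph `E_J`. -/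
def negEdgeSet (G : FinGraph) (J : Set (FPath G × FPath G)) :
    Set ((FPath G × FPath G) × (FPath G × FPath G)) :=
  {e | e.1 ∈ J ∧ e.2 ∈ J ∧ CGAdj e.1 e.2 ∧ cgDeg e.1 e.2 < 0}

/-- `IsFinalNeg G J p q ω d` : the edge from `p` to `q` in `E_J` is a final negative
edge with destination `d`, via the zero path `ω` from `q` to `d`; the height of the
edge is `ω.verts.length - 1`. -/
def IsFinalNeg (G : FinGraph) (J : Set (FPath G × FPath G))
    (p q : FPath G × FPath G) (ω : CGPath G J) (d : FPath G × FPath G) : Prop :=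
  p ∈ J ∧ q ∈ J ∧ CGAdj p q ∧ cgDeg p q < 0 ∧
    ω.verts.head ω.ne = q ∧ ω.verts.getLast ω.ne = d ∧
    (ω.verts.Chain' fun a b => cgDeg a b = 0) ∧ AllOutPositive G J d

/-- `(E_J, E)` is left-synchronizing with delay `m` : any two paths of length `m`
(i.e. with `m+1` vertices) in `E_J` with the same `E`-label have the same source. -/
def LeftSyncDelay (G : FinGraph) (J : Set (FPath G × FPath G)) (m : ℕ) : Prop :=
  ∀ ω ξ : CGPath G J, ω.verts.length = m + 1 → ξ.verts.length = m + 1 →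
    ω.elabel = ξ.elabel → ω.verts.head ω.ne = ξ.verts.head ξ.ne

/-- An infinite path in the coding graph `E_J`. -/
structure CGIPath (G : FinGraph) (J : Set (FPath G × FPath G)) where
  verts : ℕ → FPath G × FPath G
  mem : ∀ i, verts i ∈ J
  adj : ∀ i, CGAdj (verts i) (verts (i + 1))

/-- The infinite `E`-label of an infinite coding-graph path is the infinite path `α`. -/
def ELabelInf {J : Set (FPath G × FPath G)} (ω : CGIPath G J) (α : IPath G) : Prop :=
  ∀ i, (ω.verts i).2.edges.head? = some (α.edges i)

/-- A transducer with input alphabet `A`, output alphabet `B`, a finite state set,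
an initial state and a transition function. -/
structure Transducer (A B : Type) where
  S : Type
  finS : Finite S
  init : S
  tr : S → A → S × List B

/-- The state sequence of a transducer on an infinite input word. -/
def Transducer.states {A B : Type} (T : Transducer A B) (α : ℕ → A) : ℕ → T.S
  | 0 => T.init
  | n + 1 => (T.tr (T.states α n) (α n)).1

/-- The `n`-th output block of a transducer on an infinite input word. -/
def Transducer.outBlock {A B : Type} (T : Transducer A B) (α : ℕ → A) (n : ℕ) : List B :=
  (T.tr (T.states α n) (α n)).2

/-- The concatenation of the first `n` blocks of a sequence of finite words. -/
def joinUpTo {X : Type} (f : ℕ → List X) (n : ℕ) : List X :=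
  ((List.range n).map f).flatten

/-- Two infinite concatenations of sequences of finite words are equal. -/
def StreamsEq {X : Type} (f g : ℕ → List X) : Prop :=
  (∀ n, ∃ m, joinUpTo f n <+: joinUpTo g m) ∧ ∀ n, ∃ m, joinUpTo g n <+: joinUpTo f m

/-- The type of edges of the coding graph `E_J`. -/
def CGEdgeT (G : FinGraph) (J : Set (FPath G × FPath G)) : Type :=
  {e : (FPath G × FPath G) × (FPath G × FPath G) // e.1 ∈ J ∧ e.2 ∈ J ∧ CGAdj e.1 e.2}

/-- The sequence of edges of an infinite coding-graph path. -/
def CGIPath.edgeSeq {J : Set (FPath G × FPath G)} (ω : CGIPath G J) (i : ℕ) : CGEdgeT G J :=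
  ⟨(ω.verts i, ω.verts (i + 1)), ω.mem i, ω.mem (i + 1), ω.adj i⟩

/-! ### Auxiliary lemmas for the splitting theorem -/

theorem FPath.ext' {p q : FPath G} (hs : p.source = q.source) (he : p.edges = q.edges) :
    p = q := by
  cases p; cases q; simp_all

theorem aux_elim_tail (s : G.V) (l : List G.E) (h : l ≠ []) :
    l.tail.getLast?.elim (l.head?.elim s G.rng) G.rng = l.getLast?.elim s G.rng := by
  match l with
  | [a] => simp
  | a :: b :: t =>
    simp only [List.tail_cons, List.getLast?_cons_cons,
      List.getLast?_eq_getLast (List.cons_ne_nil b t), Option.elim]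

/-- `r(κ) = r(eκ)` : removing the first edge does not change the range. -/
theorem tail_range (p : FPath G) (h : p.edges ≠ []) : p.tail.range = p.range :=
  aux_elim_tail p.source p.edges h

/-- The source of the edge following a proper prefix is the range of the prefix. -/
theorem src_get_of_prefix (ν q : FPath G) (hp : FPath.Prefix ν q)
    (h : ν.edges.length < q.edges.length) :
    G.src (q.edges.get ⟨ν.edges.length, h⟩) = ν.range := by
  obtain ⟨hs, t, ht⟩ := hp
  by_cases hν : ν.edges = []
  · -- `ν` is a vertex: the edge is the first edge of `q`
    have h0 : ν.edges.length = 0 := by simp [hν]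
    have hne : q.edges ≠ [] := List.ne_nil_of_length_pos (by omega)
    simp only [h0]
    rw [List.get_mk_zero]
    have hh := q.head_src (q.edges.head hne) (by exact List.head?_eq_head hne)
    rw [hh, ← hs]
    simp [FPath.range, hν]
  · -- `ν` ends with an edge; use the chain condition of `q`
    have hnil : ν.edges ≠ [] := hν
    have hν1 : 0 < ν.edges.length := List.length_pos_iff.mpr hnil
    have hlt : ν.edges.length - 1 < q.edges.length - 1 := by omega
    have hc : G.rng (q.edges.get ⟨ν.edges.length - 1, by omega⟩)
        = G.src (q.edges.get ⟨ν.edges.length - 1 + 1, by omega⟩) :=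
      (List.isChain_iff_getElem.mp q.chain) (ν.edges.length - 1) (by omega)
    have hidx : ν.edges.length - 1 + 1 = ν.edges.length := by omega
    have hpre : ν.edges <+: q.edges := ⟨t, ht⟩
    have hgl : q.edges.get ⟨ν.edges.length - 1, by omega⟩ = ν.edges.getLast hnil := by
      have h1 : ν.edges.length - 1 < ν.edges.length := by omega
      have h2 := hpre.getElem h1
      rw [List.get_eq_getElem, List.getLast_eq_getElem]
      exact h2.symm
    have hrange : ν.range = G.rng (ν.edges.getLast hnil) := by
      simp [FPath.range, List.getLast?_eq_getLast hnil]
    have hfin : q.edges.get ⟨ν.edges.length - 1 + 1, by omega⟩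
        = q.edges.get ⟨ν.edges.length, h⟩ := by
      apply congrArg
      apply Fin.ext
      show ν.edges.length - 1 + 1 = ν.edges.length
      omega
    rw [hrange, ← hgl, hc, hfin]

/-- Extending a path by one following edge. -/
def FPath.snoc (p : FPath G) (f : G.E) (h : G.src f = p.range) : FPath G where
  source := p.source
  edges := p.edges ++ [f]
  head_src := by
    intro x hx
    rcases hl : p.edges with _ | ⟨a, l⟩
    · rw [hl] at hx; simp at hx; subst hx
      rw [h]; simp [FPath.range, hl]
    · rw [hl] at hx; simp at hx; subst hx
      exact p.head_src a (by rw [hl]; rfl)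
  chain := by
    rw [List.Chain', List.isChain_append]
    refine ⟨p.chain, List.isChain_singleton f, ?_⟩
    intro x hx y hy
    simp at hy; subst hy
    rw [Option.mem_def] at hx
    rw [h]; simp [FPath.range, hx]

theorem isSnoc_snoc (p : FPath G) (f : G.E) (h : G.src f = p.range) :
    IsSnoc p f (p.snoc f h) := ⟨rfl, rfl⟩

/-- The tail of `νf` is (tail ν)f, provided `ν` is not a vertex. -/
theorem tail_snoc (ν q : FPath G) (f : G.E) (h : IsSnoc ν f q) (hne : ν.edges ≠ []) :
    q.tail.source = ν.tail.source ∧ q.tail.edges = ν.tail.edges ++ [f] := by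
  obtain ⟨hs, he⟩ := h
  rcases hl : ν.edges with _ | ⟨a, l⟩
  · exact absurd hl hne
  · constructor
    · show q.edges.head?.elim q.source G.rng = ν.edges.head?.elim ν.source G.rng
      rw [he, hl, hs]; simp
    · show q.edges.tail = ν.edges.tail ++ [f]
      rw [he, hl]; simp

theorem prefix_snoc_get {α : Type*} (l m : List α) (h : l <+: m) (hl : l.length < m.length) :
    l ++ [m.get ⟨l.length, hl⟩] <+: m := by
  obtain ⟨t, rfl⟩ := h
  rcases t with _ | ⟨a, t⟩
  · simp at hl
  · have hg : (l ++ a :: t).get ⟨l.length, hl⟩ = a := by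
      rw [List.get_eq_getElem, List.getElem_append_right (le_refl l.length)]
      simp
    rw [hg]
    exact ⟨t, by simp⟩

theorem eq_get_of_comparable {α : Type*} {l m : List α} {x : α}
    (hm : l.length < m.length) (h : l ++ [x] <+: m ∨ m <+: l ++ [x]) :
    m.get ⟨l.length, hm⟩ = x := by
  rcases h with h | h
  · have hle : l.length < (l ++ [x]).length := by simp
    have h2 := h.getElem hle
    simp only [List.getElem_concat_length] at h2
    exact (List.get_eq_getElem).trans h2.symm
  · have hlen : m.length = l.length + 1 := by
      have := h.length_le; simp at this; omega
    have heq := h.eq_of_length (by simp [hlen])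
    subst heq
    simp

/-- STATEMENT 9 (SE1)–(SE4): description of the edges of the coding graph `E_{J'}` of
the splitting `J'` of `J` at a vertex `p = (μ, eν)` all of whose outgoing edges are
positive. -/
theorem splitting_edges (G : FinGraph) (hG : Standing G)
    (J : Set (FPath G × FPath G)) (hJ : IsUnitaryJ G J)
    (p : FPath G × FPath G) (hp : p ∈ J) (hout : AllOutPositive G J p)
    (J' : Set (FPath G × FPath G)) (hsplit : IsSplitting G J p J') :
    -- edges between vertices different from `p` are unaffected
    (∀ a ∈ J, ∀ b ∈ J, a ≠ p → b ≠ p → CGAdj a b → a ∈ J' ∧ b ∈ J' ∧ CGAdj a b) ∧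
    -- (SE1)
    (∀ q ∈ J, q.1 ≠ p.1 → CGAdj p q →
      ∃! f : G.E, G.src f = FPath.range p.1 ∧
        ∃ p' : FPath G × FPath G, (IsSnoc p.1 f p'.1 ∧ IsSnoc p.2 f p'.2) ∧
          p' ∈ J' ∧ CGAdj p' q ∧ cgDeg p' q = cgDeg p q - 1) ∧
    -- (SE2)
    (CGAdj p p →
      ∃! f : G.E, G.src f = FPath.range p.1 ∧
        ∀ b : G.E, G.src b = FPath.range p.1 → ∀ p' p'' : FPath G × FPath G,
          (IsSnoc p.1 f p'.1 ∧ IsSnoc p.2 f p'.2) →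
          (IsSnoc p.1 b p''.1 ∧ IsSnoc p.2 b p''.2) →
          p' ∈ J' ∧ p'' ∈ J' ∧ CGAdj p' p'' ∧ cgDeg p' p'' = cgDeg p p) ∧
    -- (SE3)
    (∀ q ∈ J, q.1 ≠ p.1 → CGAdj q p → 0 ≤ cgDeg q p →
      ∀ f : G.E, G.src f = FPath.range p.1 → ∀ p' : FPath G × FPath G,
        (IsSnoc p.1 f p'.1 ∧ IsSnoc p.2 f p'.2) →
        q ∈ J' ∧ p' ∈ J' ∧ CGAdj q p' ∧ cgDeg q p' = cgDeg q p + 1) ∧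
    -- (SE4)
    (∀ q ∈ J, q.1 ≠ p.1 → CGAdj q p → cgDeg q p < 0 →
      ∃! f : G.E, G.src f = FPath.range p.1 ∧
        ∃ p' : FPath G × FPath G, (IsSnoc p.1 f p'.1 ∧ IsSnoc p.2 f p'.2) ∧
          q ∈ J' ∧ p' ∈ J' ∧ CGAdj q p' ∧ cgDeg q p' = cgDeg q p + 1) := by
  obtain ⟨hpJ, hmemJ'⟩ := hsplit
  have hne2 : p.2.edges ≠ [] := hJ.ne_nil p hp
  have hνrange : p.2.tail.range = p.1.range := by
    rw [tail_range p.2 hne2, ← hJ.rng_eq p hp]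
  have hmem_old : ∀ q ∈ J, q ≠ p → q ∈ J' := fun q hq hqp =>
    (hmemJ' q).2 (Or.inl ⟨hq, hqp⟩)
  have hmem_new : ∀ (f : G.E), G.src f = p.1.range → ∀ q' : FPath G × FPath G,
      IsSnoc p.1 f q'.1 → IsSnoc p.2 f q'.2 → q' ∈ J' := fun f hf q' h1 h2 =>
    (hmemJ' q').2 (Or.inr ⟨f, hf, h1, h2⟩)
  refine ⟨?_, ?_, ?_, ?_, ?_⟩
  · -- edges away from `p` are unaffected
    intro a ha b hb hap hbp hadj
    exact ⟨hmem_old a ha hap, hmem_old b hb hbp, hadj⟩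
  · -- (SE1)
    intro q hq hq1 hadj
    have hd := hout q hq hadj
    have hlen : p.2.tail.edges.length < q.1.edges.length := by
      simp only [cgDeg] at hd; omega
    have hpre : FPath.Prefix p.2.tail q.1 := by
      rcases hadj with h | h
      · exact h
      · exact absurd h.2.length_le (by omega)
    set f := q.1.edges.get ⟨p.2.tail.edges.length, hlen⟩ with hf
    have hsrc : G.src f = p.1.range := by
      rw [hf, src_get_of_prefix p.2.tail q.1 hpre hlen, hνrange]
    have hsrc2 : G.src f = p.2.range := by rw [hsrc, hJ.rng_eq p hp]
    obtain ⟨hts, hte⟩ :=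
      tail_snoc p.2 (p.2.snoc f hsrc2) f (isSnoc_snoc p.2 f hsrc2) hne2
    refine ⟨f, ⟨hsrc, (p.1.snoc f hsrc, p.2.snoc f hsrc2),
      ⟨isSnoc_snoc p.1 f hsrc, isSnoc_snoc p.2 f hsrc2⟩,
      hmem_new f hsrc (p.1.snoc f hsrc, p.2.snoc f hsrc2) (isSnoc_snoc p.1 f hsrc) (isSnoc_snoc p.2 f hsrc2), ?_, ?_⟩, ?_⟩
    · left
      refine ⟨?_, ?_⟩
      · rw [hts]; exact hpre.1
      · rw [hte]; exact prefix_snoc_get _ _ hpre.2 hlen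
    · simp only [cgDeg, hte, List.length_append, List.length_cons, List.length_nil]
      omega
    · rintro f' ⟨hf', p'', ⟨hs1, hs2⟩, hmem, hadj', hdeg'⟩
      obtain ⟨hts', hte'⟩ := tail_snoc p.2 p''.2 f' hs2 hne2
      have hkey : q.1.edges.get ⟨p.2.tail.edges.length, hlen⟩ = f' := by
        apply eq_get_of_comparable hlen
        rcases hadj' with h | h
        · left; rw [← hte']; exact h.2
        · right; rw [← hte']; exact h.2
      rw [hf]; exact hkey.symm
  · -- (SE2)
    intro hadj
    have hd := hout p hp hadj
    have hlen : p.2.tail.edges.length < p.1.edges.length := by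
      simp only [cgDeg] at hd; omega
    have hpre : FPath.Prefix p.2.tail p.1 := by
      rcases hadj with h | h
      · exact h
      · exact absurd h.2.length_le (by omega)
    set f := p.1.edges.get ⟨p.2.tail.edges.length, hlen⟩ with hf
    have hsrc : G.src f = p.1.range := by
      rw [hf, src_get_of_prefix p.2.tail p.1 hpre hlen, hνrange]
    refine ⟨f, ⟨hsrc, ?_⟩, ?_⟩
    · intro b hb p' p'' h1 h2
      obtain ⟨ha1, ha2⟩ := h1
      obtain ⟨hb1, hb2⟩ := h2
      obtain ⟨hts, hte⟩ := tail_snoc p.2 p'.2 f ha2 hne2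
      refine ⟨hmem_new f hsrc p' ha1 ha2, hmem_new b hb p'' hb1 hb2, ?_, ?_⟩
      · left
        refine ⟨?_, ?_⟩
        · rw [hts, hb1.1]; exact hpre.1
        · rw [hte, hb1.2]
          exact (prefix_snoc_get _ _ hpre.2 hlen).trans (List.prefix_append _ _)
      · simp only [cgDeg, hte, hb1.2, List.length_append, List.length_cons,
          List.length_nil]
        omega
    · rintro f' ⟨hf', H⟩
      have hsrc2' : G.src f' = p.2.range := by rw [hf', ← hJ.rng_eq p hp]
      obtain ⟨-, -, hadj', -⟩ := H f' hf' (p.1.snoc f' hf', p.2.snoc f' hsrc2')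
        (p.1.snoc f' hf', p.2.snoc f' hsrc2')
        ⟨isSnoc_snoc p.1 f' hf', isSnoc_snoc p.2 f' hsrc2'⟩
        ⟨isSnoc_snoc p.1 f' hf', isSnoc_snoc p.2 f' hsrc2'⟩
      obtain ⟨hts, hte⟩ :=
        tail_snoc p.2 (p.2.snoc f' hsrc2') f' (isSnoc_snoc p.2 f' hsrc2') hne2
      have hlen' : p.2.tail.edges.length < (p.1.edges ++ [f']).length := by
        simp; omega
      have hgf' : (p.1.edges ++ [f']).get ⟨p.2.tail.edges.length, hlen'⟩ = f' := by
        apply eq_get_of_comparable hlen'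
        rcases hadj' with h | h
        · left; rw [← hte]; exact h.2
        · right; rw [← hte]; exact h.2
      have hgf : (p.1.edges ++ [f']).get ⟨p.2.tail.edges.length, hlen'⟩ = f := by
        rw [hf, List.get_eq_getElem, List.get_eq_getElem,
          List.getElem_append_left hlen]
      rw [← hgf, hgf']
  · -- (SE3)
    intro q hq hq1 hadj hd
    have hd' : q.2.tail.edges.length ≤ p.1.edges.length := by
      simp only [cgDeg] at hd; omega
    have hpre : FPath.Prefix q.2.tail p.1 := by
      rcases hadj with h | h
      · exact h
      · have hlen := h.2.length_le
        have heq : p.1.edges = q.2.tail.edges := h.2.eq_of_length (by omega)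
        exact ⟨h.1.symm, by rw [heq]⟩
    intro f hf p' hsn
    obtain ⟨hs1, hs2⟩ := hsn
    refine ⟨hmem_old q hq (fun h => hq1 (congrArg Prod.fst h)),
      hmem_new f hf p' hs1 hs2, ?_, ?_⟩
    · left
      refine ⟨?_, ?_⟩
      · rw [hs1.1]; exact hpre.1
      · rw [hs1.2]; exact hpre.2.trans (List.prefix_append _ _)
    · simp only [cgDeg, hs1.2, List.length_append, List.length_cons, List.length_nil]
      omega
  · -- (SE4)
    intro q hq hq1 hadj hd
    have hlen : p.1.edges.length < q.2.tail.edges.length := by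
      simp only [cgDeg] at hd; omega
    have hpre : FPath.Prefix p.1 q.2.tail := by
      rcases hadj with h | h
      · exact absurd h.2.length_le (by omega)
      · exact h
    set f := q.2.tail.edges.get ⟨p.1.edges.length, hlen⟩ with hf
    have hsrc : G.src f = p.1.range := src_get_of_prefix p.1 q.2.tail hpre hlen
    have hsrc2 : G.src f = p.2.range := by rw [hsrc, hJ.rng_eq p hp]
    refine ⟨f, ⟨hsrc, (p.1.snoc f hsrc, p.2.snoc f hsrc2),
      ⟨isSnoc_snoc p.1 f hsrc, isSnoc_snoc p.2 f hsrc2⟩,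
      hmem_old q hq (fun h => hq1 (congrArg Prod.fst h)),
      hmem_new f hsrc (p.1.snoc f hsrc, p.2.snoc f hsrc2) (isSnoc_snoc p.1 f hsrc) (isSnoc_snoc p.2 f hsrc2), ?_, ?_⟩, ?_⟩
    · right
      refine ⟨?_, ?_⟩
      · exact hpre.1
      · exact prefix_snoc_get _ _ hpre.2 hlen
    · show ((p.1.edges ++ [f]).length : ℤ) - (q.2.tail.edges.length : ℤ) = _
      simp only [cgDeg, List.length_append, List.length_cons, List.length_nil]
      omega
    · rintro f' ⟨hf', p'', ⟨hs1, hs2⟩, -, -, hadj', -⟩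
      have hkey : q.2.tail.edges.get ⟨p.1.edges.length, hlen⟩ = f' := by
        apply eq_get_of_comparable hlen
        rcases hadj' with h | h
        · right; rw [← hs1.2]; exact h.2
        · left; rw [← hs1.2]; exact h.2
      rw [hf]; exact hkey.symm
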